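/- Let t_r > 0, x_d ∈ [0, t_r), and let λ, a : ℝ → ℝ be continuous functions, both periodic with period t_r, with λ nonnegative. Set Λ := ∫₀^{t_r} λ(τ) dτ and assume Λ > 0. Suppose that for every x ∈ ℝ, a(x) = (1 − exp(−Λ))⁻¹ · ∫_{x − x_d − t_r}^{x − x_d} λ(y) · a(y) · exp(−∫_{y + x_d}^{x} λ(τ) dτ) dy. Then a is differentiable on ℝ and a'(x) = λ(x − x_d)·a(x − x_d) − λ(x)·a(x) for every x ∈ ℝ. -/

import Mathlib

open intervalIntegral

private lemma primitive_hasDerivAt (f : ℝ → ℝ) (hf : Continuous f) (t : ℝ) :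
    HasDerivAt (fun u => ∫ s in (0:ℝ)..u, f s) (f t) t :=
  intervalIntegral.integral_hasDerivAt_right (hf.intervalIntegrable _ _)
    (hf.stronglyMeasurableAtFilter _ _) hf.continuousAt

/-- The dead-time attenuation factor `a` satisfying the stationarity integral
equation is differentiable and satisfies the delay differential equation
`a'(x) = λ(x − x_d)a(x − x_d) − λ(x)a(x)` (equations (19)–(20) of the paper). -/
theorem attenuation_delay_ode
    (tr : ℝ) (htr : 0 < tr) (xd : ℝ) (hxd : xd ∈ Set.Ico (0 : ℝ) tr)
    (lam a : ℝ → ℝ) (hlamc : Continuous lam) (hac : Continuous a)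
    (hlamper : Function.Periodic lam tr) (haper : Function.Periodic a tr)
    (hnn : ∀ t, 0 ≤ lam t)
    (Λ : ℝ) (hΛdef : Λ = ∫ τ in (0 : ℝ)..tr, lam τ) (hΛ : 0 < Λ)
    (hstat : ∀ x : ℝ,
      a x = (1 - Real.exp (-Λ))⁻¹ *
        ∫ y in (x - xd - tr)..(x - xd),
          lam y * a y * Real.exp (-(∫ τ in (y + xd)..x, lam τ))) :
    ∀ x : ℝ, HasDerivAt a (lam (x - xd) * a (x - xd) - lam x * a x) x := by
  have hden : 1 - Real.exp (-Λ) ≠ 0 := by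
    have : Real.exp (-Λ) < 1 := Real.exp_lt_one_iff.mpr (by linarith)
    linarith
  set c : ℝ := (1 - Real.exp (-Λ))⁻¹ with hc
  set L : ℝ → ℝ := fun t => ∫ τ in (0:ℝ)..t, lam τ with hLdef
  have hLderiv : ∀ t, HasDerivAt L (lam t) t := primitive_hasDerivAt lam hlamc
  have hLc : Continuous L :=
    continuous_iff_continuousAt.mpr fun t => (hLderiv t).continuousAt
  set G : ℝ → ℝ := fun y => lam y * a y * Real.exp (L (y + xd)) with hGdef
  have hGc : Continuous G :=
    (hlamc.mul hac).mul (Real.continuous_exp.comp (hLc.comp (continuous_id.add continuous_const)))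
  set H : ℝ → ℝ := fun t => ∫ s in (0:ℝ)..t, G s with hHdef
  have hHderiv : ∀ t, HasDerivAt H (G t) t := primitive_hasDerivAt G hGc
  -- the interval integral of lam equals a difference of L
  have hLsub : ∀ u v : ℝ, (∫ τ in u..v, lam τ) = L v - L u := fun u v =>
    (intervalIntegral.integral_interval_sub_left (hlamc.intervalIntegrable _ _)
      (hlamc.intervalIntegrable _ _)).symm
  have hHsub : ∀ u v : ℝ, (∫ s in u..v, G s) = H v - H u := fun u v =>
    (intervalIntegral.integral_interval_sub_left (hGc.intervalIntegrable _ _)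
      (hGc.intervalIntegrable _ _)).symm
  -- key rewriting of the stationarity equation
  have hkey : ∀ x : ℝ,
      a x = c * (Real.exp (-(L x)) * (H (x - xd) - H (x - xd - tr))) := by
    intro x
    rw [hstat x]
    congr 1
    rw [← hHsub, ← intervalIntegral.integral_const_mul]
    apply intervalIntegral.integral_congr
    intro y _
    show lam y * a y * Real.exp (-(∫ τ in (y + xd)..x, lam τ)) = Real.exp (-(L x)) * G y
    rw [hLsub (y + xd) x, hGdef]
    simp only [neg_sub, Real.exp_sub, Real.exp_neg]
    field_simp
  -- Λ equals the integral of lam over any period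
  have hLper : ∀ t : ℝ, L t - L (t - tr) = Λ := by
    intro t
    have h1 : (∫ τ in (t - tr)..(t - tr + tr), lam τ) = ∫ τ in (0:ℝ)..(0 + tr), lam τ :=
      hlamper.intervalIntegral_add_eq (t - tr) 0
    have h2 := hLsub (t - tr) t
    rw [show t - tr + tr = t by ring] at h1
    rw [h1] at h2
    simp only [zero_add] at h2
    rw [← hΛdef] at h2
    linarith
  intro x
  -- derivative of the exponential factor
  have hE : HasDerivAt (fun u => Real.exp (-(L u))) (-lam x * Real.exp (-(L x))) x := by
    have := ((hLderiv x).neg).exp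
    simpa [mul_comm] using this
  -- derivative of the shifted primitives
  have h1 : HasDerivAt (fun u => H (u - xd)) (G (x - xd)) x := by
    have := (hHderiv (x - xd)).comp x ((hasDerivAt_id x).sub_const xd)
    simpa [Function.comp_def] using this
  have h2 : HasDerivAt (fun u => H (u - xd - tr)) (G (x - xd - tr)) x := by
    have := (hHderiv (x - xd - tr)).comp x (((hasDerivAt_id x).sub_const xd).sub_const tr)
    simpa [Function.comp_def] using this
  have hA : HasDerivAt (fun u => c * (Real.exp (-(L u)) * (H (u - xd) - H (u - xd - tr))))
      (c * ((-lam x * Real.exp (-(L x))) * (H (x - xd) - H (x - xd - tr)) +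
        Real.exp (-(L x)) * (G (x - xd) - G (x - xd - tr)))) x :=
    (hE.mul (h1.sub h2)).const_mul c
  have hA' : HasDerivAt a
      (c * ((-lam x * Real.exp (-(L x))) * (H (x - xd) - H (x - xd - tr)) +
        Real.exp (-(L x)) * (G (x - xd) - G (x - xd - tr)))) x :=
    hA.congr_of_eventuallyEq (Filter.Eventually.of_forall fun u => hkey u)
  convert hA' using 1
  -- now the algebraic identity for the derivative value
  have hax : a x = c * (Real.exp (-(L x)) * (H (x - xd) - H (x - xd - tr))) := hkey x
  have hGd : G (x - xd) = lam (x - xd) * a (x - xd) * Real.exp (L x) := by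
    rw [hGdef]; simp only []
    rw [show x - xd + xd = x by ring]
  have hGd' : G (x - xd - tr) = lam (x - xd) * a (x - xd) * Real.exp (L (x - tr)) := by
    rw [hGdef]; simp only []
    rw [show x - xd - tr + xd = x - tr by ring, hlamper.sub_eq (x - xd), haper.sub_eq (x - xd)]
  have hLx : L (x - tr) = L x - Λ := by have := hLper x; linarith
  rw [hGd, hGd', hLx]
  have he1 : Real.exp (-(L x)) * Real.exp (L x) = 1 := by
    rw [← Real.exp_add]; simp
  have he2 : Real.exp (-(L x)) * Real.exp (L x - Λ) = Real.exp (-Λ) := by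
    rw [← Real.exp_add]; ring_nf
  have hcmul : c * (1 - Real.exp (-Λ)) = 1 := inv_mul_cancel₀ hden
  rw [hax]
  calc lam (x - xd) * a (x - xd) - lam x * (c * (Real.exp (-(L x)) * (H (x - xd) - H (x - xd - tr))))
      = c * (Real.exp (-(L x)) * Real.exp (L x) - Real.exp (-(L x)) * Real.exp (L x - Λ)) * (lam (x - xd) * a (x - xd)) / (c * (1 - Real.exp (-Λ))) - lam x * (c * (Real.exp (-(L x)) * (H (x - xd) - H (x - xd - tr)))) := by
        rw [he1, he2, hcmul]; ring
    _ = c * ((-lam x * Real.exp (-(L x))) * (H (x - xd) - H (x - xd - tr)) +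
        Real.exp (-(L x)) * (lam (x - xd) * a (x - xd) * Real.exp (L x) - lam (x - xd) * a (x - xd) * Real.exp (L x - Λ))) := by
        rw [hcmul]; ring
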